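/- Let Y be a variable. For every positive integer n: det_{0≤i,j≤n−1}( Y + 2^{−2⌈(i+j+1)/2⌉} · binom(2⌈(i+j+1)/2⌉, ⌈(i+j+1)/2⌉) ) = (−1)^{binom(n,2)} · 2^{−n²} · ( 2⌈n/2⌉·Y + 1 ). -/

import Mathlib

namespace HDAux

open Polynomial Finset Matrix

noncomputable section

/-- binomial with integer arguments, 0 when either is negative -/
def chq (n k : ℤ) : ℚ := if 0 ≤ n ∧ 0 ≤ k then ((n.toNat).choose k.toNat : ℚ) else 0

lemma chq_neg {n k : ℤ} (hk : k < 0) : chq n k = 0 := by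
  simp [chq]; intro _; omega

lemma chq_nat (n k : ℕ) : chq n k = n.choose k := by simp [chq]

lemma chq_pascal (n : ℕ) (k : ℤ) : chq ((n : ℤ) + 1) k = chq n k + chq n (k - 1) := by
  rcases lt_or_ge k 0 with hk | hk
  · rw [chq_neg hk, chq_neg hk, chq_neg (by omega), add_zero]
  · obtain ⟨m, rfl⟩ := Int.eq_ofNat_of_zero_le hk
    cases m with
    | zero => simp [chq]; omega
    | succ m =>
      have h1 : ((n : ℤ) + 1) = ((n + 1 : ℕ) : ℤ) := by push_cast; ring
      have h2 : ((m + 1 : ℕ) : ℤ) - 1 = (m : ℤ) := by push_cast; ring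
      rw [h1, h2, chq_nat, chq_nat, chq_nat, Nat.choose_succ_succ' n m]
      push_cast; ring

lemma chq_symm_aux (t : ℕ) : chq (2 * t) ((t : ℤ) + 1) = chq (2 * t) ((t : ℤ) - 1) := by
  cases t with
  | zero => simp [chq]
  | succ s =>
    have h2 : ((s + 1 : ℕ) : ℤ) - 1 = ((s : ℕ) : ℤ) := by push_cast; ring
    have h3 : ((s + 1 : ℕ) : ℤ) + 1 = ((s + 2 : ℕ) : ℤ) := by push_cast; ring
    have h4 : (2 * ((s+1:ℕ)) : ℤ) = ((2*(s+1) : ℕ) : ℤ) := by push_cast; ring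
    rw [h2, h3, h4, chq_nat, chq_nat]
    have := Nat.choose_symm (n := 2 * (s + 1)) (k := s + 2) (by omega)
    have he : 2 * (s + 1) - (s + 2) = s := by omega
    rw [he] at this
    rw [this]

def bb (i : ℕ) : ℚ := if i % 2 = 0 then 0 else -2

/-- closed form for the modified moments -/
def Nf (i s : ℕ) : ℚ :=
  if i % 2 = 0 then
    if (i + s) % 2 = 0 then chq ((s : ℤ) + 1) (((s : ℤ) - i) / 2) / 2 ^ (i + s + 1)
    else chq (s : ℤ) (((s : ℤ) - i - 1) / 2) / 2 ^ (i + s)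
  else
    if (i + s) % 2 = 0 then
      (chq ((s : ℤ) - 1) (((s : ℤ) - i) / 2 - 2) - chq ((s : ℤ) - 1) (((s : ℤ) - i) / 2)) /
        2 ^ (i + s + 1)
    else 0

lemma Nf_vanish {i s : ℕ} (h : s < i) : Nf i s = 0 := by
  unfold Nf
  split_ifs with h1 h2 h3
  · rw [chq_neg (by omega)]; simp
  · rw [chq_neg (by omega)]; simp
  · rw [chq_neg (by omega), chq_neg (by omega)]; simp
  · rfl

lemma Nf_diag (i : ℕ) : Nf i i = (-1) ^ i / 2 ^ (2 * i + 1) := by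
  unfold Nf
  rcases Nat.even_or_odd i with hi | hi
  · have h1 : i % 2 = 0 := Nat.even_iff.mp hi
    have h2 : (i + i) % 2 = 0 := by omega
    rw [if_pos h1, if_pos h2]
    have h3 : ((i : ℤ) - i) / 2 = ((0 : ℕ) : ℤ) := by omega
    have h4 : ((i : ℤ) + 1) = ((i + 1 : ℕ) : ℤ) := by push_cast; ring
    rw [h3, h4, chq_nat, Nat.choose_zero_right, hi.neg_one_pow]
    norm_num; ring_nf
  · have h1 : ¬ (i % 2 = 0) := by rw [Nat.odd_iff] at hi; omega
    have h2 : (i + i) % 2 = 0 := by omega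
    rw [if_neg h1, if_pos h2]
    have h3 : ((i : ℤ) - i) / 2 = ((0 : ℕ) : ℤ) := by omega
    rw [h3]
    rw [chq_neg (by omega)]
    have hi1 : 1 ≤ i := by rcases hi with ⟨k, hk⟩; omega
    have h4 : ((i : ℤ) - 1) = ((i - 1 : ℕ) : ℤ) := by omega
    rw [h4, chq_nat, Nat.choose_zero_right, Odd.neg_one_pow hi]
    norm_num; ring_nf

lemma chq_pascal2 (n : ℕ) (k : ℤ) :
    chq ((n : ℤ) + 2) k = chq n k + 2 * chq n (k - 1) + chq n (k - 2) := by
  have h := chq_pascal (n + 1) k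
  rw [show ((n + 1 : ℕ) : ℤ) = (n : ℤ) + 1 by push_cast; ring] at h
  rw [show ((n : ℤ) + 2) = ((n : ℤ) + 1) + 1 by ring, h, chq_pascal n k, chq_pascal n (k - 1),
    show k - 1 - 1 = k - 2 by ring]
  ring

lemma chq_pascal3 (n : ℕ) (k : ℤ) :
    chq ((n : ℤ) + 3) k =
      chq n k + 3 * chq n (k - 1) + 3 * chq n (k - 2) + chq n (k - 3) := by
  have h := chq_pascal2 (n + 1) k
  rw [show ((n + 1 : ℕ) : ℤ) = (n : ℤ) + 1 by push_cast; ring] at h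
  rw [show ((n : ℤ) + 3) = ((n : ℤ) + 1) + 2 by ring, h, chq_pascal n k, chq_pascal n (k - 1),
    chq_pascal n (k - 2), show k - 1 - 1 = k - 2 by ring, show k - 2 - 1 = k - 3 by ring]
  ring

lemma Nf_rec (i s : ℕ) :
    Nf (i + 2) s = Nf (i + 1) (s + 1) - (1 + bb (i + 1)) * Nf (i + 1) s + (1 / 4) * Nf i s := by
  rcases Nat.even_or_odd i with hie | hio
  · -- i even
    have hi : i % 2 = 0 := Nat.even_iff.mp hie
    have hb : bb (i + 1) = -2 := by simp [bb]; omega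
    rcases Nat.even_or_odd (i + s) with hse | hso
    · -- Case 1 : i even, i+s even
      have hs : (i + s) % 2 = 0 := Nat.even_iff.mp hse
      set T : ℤ := ((s : ℤ) - i) / 2 with hT
      have e1 : Nf (i + 2) s = chq ((s : ℤ) + 1) (T - 1) / 2 ^ (i + s + 3) := by
        have c1 : (i + 2) % 2 = 0 := by omega
        have c2 : (i + 2 + s) % 2 = 0 := by omega
        simp only [Nf, c1, c2]
        norm_num
        rw [show ((s : ℤ) - ((i : ℤ) + 2)) / 2 = T - 1 by omega]
        ring_nf
      have e2 : Nf (i + 1) (s + 1) =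
          (chq (s : ℤ) (T - 2) - chq (s : ℤ) T) / 2 ^ (i + s + 3) := by
        have c1 : (i + 1) % 2 = 1 := by omega
        have c2 : (i + 1 + (s + 1)) % 2 = 0 := by omega
        simp only [Nf, c1, c2]
        norm_num
        rw [← hT]
        ring_nf
      have e3 : Nf (i + 1) s = 0 := by
        have c1 : (i + 1) % 2 = 1 := by omega
        have c2 : (i + 1 + s) % 2 = 1 := by omega
        simp only [Nf, c1, c2]
        norm_num
      have e4 : Nf i s = chq ((s : ℤ) + 1) T / 2 ^ (i + s + 1) := by
        simp only [Nf, hi, hs]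
        norm_num
        rw [← hT]
      rw [e1, e2, e3, e4, hb]
      rw [chq_pascal s (T - 1), chq_pascal s T, show T - 1 - 1 = T - 2 by ring]
      field_simp
      ring
    · -- Case 2 : i even, i+s odd
      have hs : (i + s) % 2 = 1 := Nat.odd_iff.mp hso
      obtain ⟨m, rfl⟩ : ∃ m, s = m + 1 := ⟨s - 1, by omega⟩
      set T : ℤ := ((m : ℤ) - i) / 2 with hT
      have e1 : Nf (i + 2) (m + 1) = chq ((m : ℤ) + 1) (T - 1) / 2 ^ (i + m + 3) := by
        have c1 : (i + 2) % 2 = 0 := by omega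
        have c2 : (i + 2 + (m + 1)) % 2 = 1 := by omega
        simp only [Nf, c1, c2]
        norm_num
        rw [show ((m : ℤ) + 1 - ((i : ℤ) + 2) - 1) / 2 = T - 1 by omega]
        ring_nf
      have e2 : Nf (i + 1) (m + 1 + 1) = 0 := by
        have c1 : (i + 1) % 2 = 1 := by omega
        have c2 : (i + 1 + (m + 1 + 1)) % 2 = 1 := by omega
        simp only [Nf, c1, c2]
        norm_num
      have e3 : Nf (i + 1) (m + 1) =
          (chq (m : ℤ) (T - 2) - chq (m : ℤ) T) / 2 ^ (i + m + 3) := by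
        have c1 : (i + 1) % 2 = 1 := by omega
        have c2 : (i + 1 + (m + 1)) % 2 = 0 := by omega
        simp only [Nf, c1, c2]
        norm_num
        rw [← hT]
        ring_nf
      have e4 : Nf i (m + 1) = chq ((m : ℤ) + 1) T / 2 ^ (i + m + 1) := by
        have c2 : (i + (m + 1)) % 2 = 1 := by omega
        simp only [Nf, hi, c2]
        norm_num
        rw [show ((m : ℤ) + 1 - (i : ℤ) - 1) / 2 = T by omega]
        ring_nf
      rw [e1, e2, e3, e4, hb]
      rw [chq_pascal m (T - 1), chq_pascal m T, show T - 1 - 1 = T - 2 by ring]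
      field_simp
      ring
  · -- i odd
    have hi : i % 2 = 1 := Nat.odd_iff.mp hio
    have hb : bb (i + 1) = 0 := by simp [bb]; omega
    rcases Nat.even_or_odd (i + s) with hse | hso
    · -- Case 3 : i odd, i+s even
      have hs : (i + s) % 2 = 0 := Nat.even_iff.mp hse
      obtain ⟨m, rfl⟩ : ∃ m, s = m + 1 := ⟨s - 1, by omega⟩
      set T : ℤ := ((m : ℤ) + 1 - i) / 2 with hT
      have e1 : Nf (i + 2) (m + 1) =
          (chq (m : ℤ) (T - 3) - chq (m : ℤ) (T - 1)) / 2 ^ (i + m + 4) := by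
        have c1 : (i + 2) % 2 = 1 := by omega
        have c2 : (i + 2 + (m + 1)) % 2 = 0 := by omega
        simp only [Nf, c1, c2]
        norm_num
        rw [show ((m : ℤ) + 1 - ((i : ℤ) + 2)) / 2 = T - 1 by omega,
          show T - 1 - 2 = T - 3 by ring]
        ring_nf
      have e2 : Nf (i + 1) (m + 1 + 1) = chq ((m : ℤ) + 3) T / 2 ^ (i + m + 4) := by
        have c1 : (i + 1) % 2 = 0 := by omega
        have c2 : (i + 1 + (m + 1 + 1)) % 2 = 0 := by omega
        simp only [Nf, c1, c2]
        norm_num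
        rw [← hT, show ((m : ℤ) + 1 + 1 + 1) = (m : ℤ) + 3 by ring]
        ring_nf
      have e3 : Nf (i + 1) (m + 1) = chq ((m : ℤ) + 1) (T - 1) / 2 ^ (i + m + 2) := by
        have c1 : (i + 1) % 2 = 0 := by omega
        have c2 : (i + 1 + (m + 1)) % 2 = 1 := by omega
        simp only [Nf, c1, c2]
        norm_num
        rw [show ((m : ℤ) - (i : ℤ) - 1) / 2 = T - 1 by omega]
        ring_nf
      have e4 : Nf i (m + 1) =
          (chq (m : ℤ) (T - 2) - chq (m : ℤ) T) / 2 ^ (i + m + 2) := by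
        have c2 : (i + (m + 1)) % 2 = 0 := by omega
        simp only [Nf, hi, c2]
        norm_num
        rw [← hT]
        ring_nf
      rw [e1, e2, e3, e4, hb]
      rw [chq_pascal3 m T, chq_pascal m (T - 1), show T - 1 - 1 = T - 2 by ring]
      field_simp
      ring
    · -- Case 4 : i odd, i+s odd
      have hs : (i + s) % 2 = 1 := Nat.odd_iff.mp hso
      have e1 : Nf (i + 2) s = 0 := by
        have c1 : (i + 2) % 2 = 1 := by omega
        have c2 : (i + 2 + s) % 2 = 1 := by omega
        simp only [Nf, c1, c2]
        norm_num
      have e2 : Nf (i + 1) (s + 1) = chq ((s : ℤ) + 1) (((s : ℤ) - i - 1) / 2) /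
          2 ^ (i + s + 2) := by
        have c1 : (i + 1) % 2 = 0 := by omega
        have c2 : (i + 1 + (s + 1)) % 2 = 1 := by omega
        simp only [Nf, c1, c2]
        norm_num
        ring_nf
      have e3 : Nf (i + 1) s = chq ((s : ℤ) + 1) (((s : ℤ) - i - 1) / 2) /
          2 ^ (i + s + 2) := by
        have c1 : (i + 1) % 2 = 0 := by omega
        have c2 : (i + 1 + s) % 2 = 0 := by omega
        simp only [Nf, c1, c2]
        norm_num
        rw [show ((s : ℤ) - ((i : ℤ) + 1)) / 2 = ((s : ℤ) - i - 1) / 2 by omega]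
        ring_nf
      have e4 : Nf i s = 0 := by
        simp only [Nf, hi, hs]
        norm_num
      rw [e1, e2, e3, e4, hb]
      ring

/-- the Hankel symbol appearing in the matrix -/
def cseq (s : ℕ) : ℚ :=
  (2 : ℚ) ^ (-(2 * (((s + 2) / 2 : ℕ) : ℤ))) *
    (Nat.choose (2 * ((s + 2) / 2)) ((s + 2) / 2) : ℚ)

lemma choose_central_double (t : ℕ) :
    (2 * (t + 1)).choose (t + 1) = 2 * ((2 * t + 1).choose t) := by
  have h1 : 2 * (t + 1) = (2 * t + 1) + 1 := by omega
  rw [h1, Nat.choose_succ_succ' (2 * t + 1) t]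
  have h2 : (2 * t + 1).choose (t + 1) = (2 * t + 1).choose t := by
    have h3 := Nat.choose_symm (n := 2 * t + 1) (k := t + 1) (by omega)
    rw [show 2 * t + 1 - (t + 1) = t by omega] at h3
    exact h3.symm
  rw [h2]; ring

lemma cseq_eval (s : ℕ) :
    cseq s = (((2 * (s / 2) + 1).choose (s / 2) : ℕ) : ℚ) / 2 ^ (2 * (s / 2) + 1) := by
  have hm : (s + 2) / 2 = s / 2 + 1 := by omega
  rw [cseq, hm]
  set t := s / 2
  rw [choose_central_double t]
  rw [show (-(2 * (((t + 1) : ℕ) : ℤ))) = -(((2 * t + 2 : ℕ) : ℤ)) by push_cast; ring,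
    _root_.zpow_neg, zpow_natCast]
  rw [show (2 : ℚ) ^ (2 * t + 2) = 2 ^ (2 * t + 1) * 2 by ring]
  push_cast
  have h2 : ((2 : ℚ) ^ (2 * t + 1)) ≠ 0 := by positivity
  field_simp

lemma Nf_zero_eq (s : ℕ) : Nf 0 s = cseq s := by
  rcases Nat.even_or_odd s with hse | hso
  · obtain ⟨t, rfl⟩ : ∃ t, s = 2 * t := ⟨s / 2, by rcases hse with ⟨k, hk⟩; omega⟩
    have c2 : (0 + 2 * t) % 2 = 0 := by omega
    simp only [Nf, c2, if_pos]
    norm_num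
    rw [show 2 * (t : ℤ) + 1 = ((2 * t + 1 : ℕ) : ℤ) by push_cast; ring, chq_nat, cseq_eval,
      show 2 * t / 2 = t by omega]
  · obtain ⟨t, rfl⟩ : ∃ t, s = 2 * t + 1 := ⟨s / 2, by rcases hso with ⟨k, hk⟩; omega⟩
    have c2 : (0 + (2 * t + 1)) % 2 = 1 := by omega
    simp only [Nf, c2]
    norm_num
    rw [show 2 * (t : ℤ) + 1 = ((2 * t + 1 : ℕ) : ℤ) by push_cast; ring, chq_nat, cseq_eval,
      show (2 * t + 1) / 2 = t by omega]

lemma Nf_one_eq (s : ℕ) : Nf 1 s = cseq (s + 1) - cseq s := by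
  rcases Nat.even_or_odd s with hse | hso
  · obtain ⟨t, rfl⟩ : ∃ t, s = 2 * t := ⟨s / 2, by rcases hse with ⟨k, hk⟩; omega⟩
    have c2 : (1 + 2 * t) % 2 = 1 := by omega
    simp only [Nf, c2]
    norm_num
    rw [cseq_eval, cseq_eval, show (2 * t + 1) / 2 = t by omega, show 2 * t / 2 = t by omega,
      sub_self]
  · obtain ⟨t, rfl⟩ : ∃ t, s = 2 * t + 1 := ⟨s / 2, by rcases hso with ⟨k, hk⟩; omega⟩
    have c2 : (1 + (2 * t + 1)) % 2 = 0 := by omega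
    simp only [Nf, c2]
    norm_num
    rw [cseq_eval, cseq_eval, show (2 * t + 1 + 1) / 2 = t + 1 by omega,
      show (2 * t + 1) / 2 = t by omega]
    -- goal: (chq (2t) (t-2) - chq (2t) t)/2^(2t+3)-ish = C(2(t+1)+1, t+1)/2^(2(t+1)+1) - C(2t+1,t)/2^(2t+1)
    have hp : ((2 * (t + 1) + 1).choose (t + 1) : ℚ) =
        chq (2 * t) ((t : ℤ) + 1) + 3 * chq (2 * t) (t : ℤ) + 3 * chq (2 * t) ((t : ℤ) - 1) +
          chq (2 * t) ((t : ℤ) - 2) := by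
      have h1 : ((2 * (t + 1) + 1 : ℕ) : ℤ) = ((2 * t : ℕ) : ℤ) + 3 := by push_cast; ring
      have h2 := chq_pascal3 (2 * t) ((t : ℤ) + 1)
      rw [show ((t : ℤ) + 1 - 1) = (t : ℤ) by ring, show ((t : ℤ) + 1 - 2) = (t : ℤ) - 1 by ring,
        show ((t : ℤ) + 1 - 3) = (t : ℤ) - 2 by ring] at h2
      rw [← chq_nat, h1]
      push_cast at h2 ⊢
      rw [h2]
    have hq : ((2 * t + 1).choose t : ℚ) = chq (2 * t) (t : ℤ) + chq (2 * t) ((t : ℤ) - 1) := by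
      have h1 : ((2 * t + 1 : ℕ) : ℤ) = ((2 * t : ℕ) : ℤ) + 1 := by push_cast; ring
      rw [← chq_nat, h1, chq_pascal (2 * t) (t : ℤ)]
      push_cast
      ring
    rw [hp, hq, chq_symm_aux t]
    have e1 : ((2 * t : ℕ) : ℤ) = 2 * (t : ℤ) := by push_cast; ring
    have e2 : ((2 * t + 1 : ℕ) : ℤ) - 1 = 2 * (t : ℤ) := by push_cast; ring
    have e3 : (2 * (t : ℤ) + 1 - 1) / 2 = (t : ℤ) := by omega
    field_simp
    ring

lemma bb_def (i : ℕ) : bb i = if i % 2 = 0 then 0 else -2 := rfl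

lemma cseq_def (s : ℕ) : cseq s =
    (2 : ℚ) ^ (-(2 * (((s + 2) / 2 : ℕ) : ℤ))) *
      (Nat.choose (2 * ((s + 2) / 2)) ((s + 2) / 2) : ℚ) := rfl

/-- the (shifted) orthogonal polynomials -/
def u : ℕ → Polynomial ℚ
  | 0 => 1
  | 1 => X - 1
  | (i + 2) => (X - C (1 + bb (i + 1))) * u (i + 1) + C (1 / 4) * u i

lemma u_zero : u 0 = 1 := rfl
lemma u_one : u 1 = X - 1 := rfl
lemma u_step (i : ℕ) : u (i + 2) = (X - C (1 + bb (i + 1))) * u (i + 1) + C (1 / 4) * u i := rfl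

lemma u_natDegree_le (i : ℕ) : (u i).natDegree ≤ i := by
  induction i using Nat.twoStepInduction with
  | zero => simp [u_zero]
  | one =>
    rw [u_one]
    simpa using natDegree_X_sub_C_le (1 : ℚ)
  | more i ih1 ih2 =>
    rw [u_step]
    refine natDegree_add_le_of_degree_le ?_ ?_
    · refine (natDegree_mul_le).trans ?_
      have := natDegree_X_sub_C_le (1 + bb (i + 1))
      omega
    · refine (natDegree_mul_le).trans ?_
      have : (C (1/4 : ℚ)).natDegree = 0 := natDegree_C _
      omega

lemma u_coeff_diag (i : ℕ) : (u i).coeff i = 1 := by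
  induction i using Nat.twoStepInduction with
  | zero => simp [u_zero]
  | one => rw [u_one]; simp [coeff_one]
  | more i ih1 ih2 =>
    rw [u_step, coeff_add, sub_mul, coeff_sub, coeff_X_mul, coeff_C_mul, coeff_C_mul]
    rw [ih2, coeff_eq_zero_of_natDegree_lt (lt_of_le_of_lt (u_natDegree_le (i + 1)) (by omega)),
      coeff_eq_zero_of_natDegree_lt (lt_of_le_of_lt (u_natDegree_le i) (by omega))]
    ring

lemma u_coeff_zero_of_lt {i k : ℕ} (h : i < k) : (u i).coeff k = 0 :=
  coeff_eq_zero_of_natDegree_lt (lt_of_le_of_lt (u_natDegree_le i) h)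

/-- modified moment sums -/
def SS (i s : ℕ) : ℚ := ∑ k ∈ range (i + 1), (u i).coeff k * cseq (k + s)

lemma SS_extend (i s m : ℕ) (h : i + 1 ≤ m) :
    ∑ k ∈ range m, (u i).coeff k * cseq (k + s) = SS i s := by
  rw [SS]
  symm
  refine Finset.sum_subset (Finset.range_subset_range.mpr h) ?_
  intro k _ hk
  rw [u_coeff_zero_of_lt (by simp at hk; omega), zero_mul]

lemma SS_eq_Nf (i s : ℕ) : SS i s = Nf i s := by
  induction i using Nat.twoStepInduction generalizing s with
  | zero =>
    rw [Nf_zero_eq]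
    simp [SS, u_zero]
  | one =>
    rw [Nf_one_eq, SS, u_one]
    rw [Finset.sum_range_succ, Finset.sum_range_succ, Finset.sum_range_zero]
    simp only [coeff_sub, coeff_X_zero, coeff_X_one, coeff_one]
    norm_num
    ring_nf
  | more i ih1 ih2 =>
    rw [Nf_rec, ← ih1, ← ih2, ← ih2]
    have hA : ∑ k ∈ range (i + 3), (X * u (i + 1)).coeff k * cseq (k + s)
        = SS (i + 1) (s + 1) := by
      show ∑ k ∈ range (i + 2 + 1), (X * u (i + 1)).coeff k * cseq (k + s) = SS (i + 1) (s + 1)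
      rw [Finset.sum_range_succ' _ (i + 2)]
      simp only [coeff_X_mul, mul_coeff_zero, coeff_X_zero, zero_mul, add_zero]
      rw [show ∑ k ∈ range (i + 2), (u (i + 1)).coeff k * cseq (k + 1 + s)
          = ∑ k ∈ range (i + 2), (u (i + 1)).coeff k * cseq (k + (s + 1)) from
        Finset.sum_congr rfl fun k _ => by rw [show k + 1 + s = k + (s + 1) by omega]]
      exact SS_extend (i + 1) (s + 1) (i + 2) (by omega)
    have hB : ∑ k ∈ range (i + 3), (u (i + 1)).coeff k * cseq (k + s) = SS (i + 1) s :=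
      SS_extend (i + 1) s (i + 3) (by omega)
    have hC : ∑ k ∈ range (i + 3), (u i).coeff k * cseq (k + s) = SS i s :=
      SS_extend i s (i + 3) (by omega)
    calc SS (i + 2) s
        = ∑ k ∈ range (i + 3), ((X * u (i + 1)).coeff k * cseq (k + s)
            - (1 + bb (i + 1)) * ((u (i + 1)).coeff k * cseq (k + s))
            + (1 / 4) * ((u i).coeff k * cseq (k + s))) := by
          rw [SS]
          refine Finset.sum_congr rfl fun k _ => ?_
          rw [u_step, coeff_add, sub_mul, coeff_sub, coeff_C_mul, coeff_C_mul]
          ring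
      _ = _ := by
          rw [Finset.sum_add_distrib, Finset.sum_sub_distrib, ← Finset.mul_sum, ← Finset.mul_sum,
            hA, hB, hC]

def vv (i : ℕ) : ℚ := if i % 2 = 0 then (1 / 2) ^ i else 0

lemma u_eval_one (i : ℕ) : (u i).eval 1 = vv i := by
  induction i using Nat.twoStepInduction with
  | zero => simp [u_zero, vv]
  | one => simp [u_one, vv]
  | more i ih1 ih2 =>
    rw [u_step]
    simp only [eval_add, eval_mul, eval_sub, eval_X, eval_C, ih1, ih2]
    rcases Nat.even_or_odd i with hie | hio
    · have h1 : i % 2 = 0 := Nat.even_iff.mp hie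
      have hb : bb (i + 1) = -2 := by rw [bb_def]; simp; omega
      have hv1 : vv (i + 1) = 0 := by rw [vv]; simp; omega
      have hv2 : vv (i + 2) = (1/4) * vv i := by
        rw [vv, vv]; simp only [h1, show (i + 2) % 2 = 0 by omega, if_pos]
        norm_num; ring
      rw [hb, hv1, hv2]; ring
    · have h1 : i % 2 = 1 := Nat.odd_iff.mp hio
      have hb : bb (i + 1) = 0 := by rw [bb_def]; simp; omega
      have hv0 : vv i = 0 := by rw [vv]; simp; omega
      have hv2 : vv (i + 2) = 0 := by rw [vv]; simp; omega
      rw [hb, hv0, hv2]; ring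

lemma coeff_sum_eq_eval_one (i m : ℕ) (h : i < m) :
    ∑ k ∈ range m, (u i).coeff k = (u i).eval 1 := by
  rw [Polynomial.eval_eq_sum_range' (lt_of_le_of_lt (u_natDegree_le i) h) 1]
  simp

lemma sum_coeff_Nf (i j m : ℕ) (hij : i ≤ j) (hm : j < m) :
    ∑ k ∈ range m, (u i).coeff k * Nf j k =
      if i = j then (-1) ^ i / 2 ^ (2 * i + 1) else 0 := by
  rcases eq_or_lt_of_le hij with rfl | hlt
  · rw [if_pos rfl]
    rw [Finset.sum_eq_single_of_mem i (Finset.mem_range.mpr hm)]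
    · rw [u_coeff_diag, Nf_diag, one_mul]
    · intro k _ hk
      rcases lt_or_gt_of_ne hk with h1 | h1
      · rw [Nf_vanish h1, mul_zero]
      · rw [u_coeff_zero_of_lt h1, zero_mul]
  · rw [if_neg hlt.ne]
    refine Finset.sum_eq_zero fun k _ => ?_
    rcases le_or_gt k i with h1 | h1
    · rw [Nf_vanish (lt_of_le_of_lt h1 hlt), mul_zero]
    · rw [u_coeff_zero_of_lt h1, zero_mul]

lemma sum_range_odd (n : ℕ) : ∑ i ∈ range n, (2 * i + 1) = n ^ 2 := by
  induction n with
  | zero => simp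
  | succ n ih => rw [Finset.sum_range_succ, ih]; ring

lemma sum_range_id' (n : ℕ) : ∑ i ∈ range n, i = n.choose 2 := by
  have h1 := Finset.sum_range_id_mul_two n
  have h2 : n.choose 2 = n * (n - 1) / 2 := Nat.choose_two_right n
  omega

lemma evens_sum (n : ℕ) :
    ∑ i ∈ range n, (if i % 2 = 0 then (2 : ℚ) else 0) = 2 * (((n + 1) / 2 : ℕ) : ℚ) := by
  induction n with
  | zero => simp
  | succ n ih =>
    rw [Finset.sum_range_succ, ih]
    rcases Nat.even_or_odd n with he | ho
    · have h1 : n % 2 = 0 := Nat.even_iff.mp he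
      rw [if_pos h1, show (n + 1 + 1) / 2 = (n + 1) / 2 + 1 by omega]
      push_cast; ring
    · have h1 : n % 2 = 1 := Nat.odd_iff.mp ho
      rw [if_neg (by omega), show (n + 1 + 1) / 2 = (n + 1) / 2 by omega, add_zero]


theorem main (Y : ℚ) (n : ℕ) (hn : 0 < n) :
    det (of fun i j : Fin n =>
        Y + (2 : ℚ) ^ (-(2 * (((i.val + j.val + 2) / 2 : ℕ) : ℤ))) *
          (Nat.choose (2 * ((i.val + j.val + 2) / 2)) ((i.val + j.val + 2) / 2) : ℚ)) =
      (-1 : ℚ) ^ (Nat.choose n 2) * (2 : ℚ) ^ (-((n ^ 2 : ℕ) : ℤ)) *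
        (2 * (((n + 1) / 2 : ℕ) : ℚ) * Y + 1) := by
  have hM : (of fun i j : Fin n =>
        Y + (2 : ℚ) ^ (-(2 * (((i.val + j.val + 2) / 2 : ℕ) : ℤ))) *
          (Nat.choose (2 * ((i.val + j.val + 2) / 2)) ((i.val + j.val + 2) / 2) : ℚ)) =
      of (fun i j : Fin n => Y + cseq (i.val + j.val)) := by
    funext i j
    rw [of_apply, of_apply, cseq_def]
  rw [hM]
  set M : Matrix (Fin n) (Fin n) ℚ := of (fun i j : Fin n => Y + cseq (i.val + j.val)) with hMdef
  set W : Matrix (Fin n) (Fin n) ℚ := of (fun p q : Fin n => (u p.val).coeff q.val) with hWdef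
  have hWapp : ∀ p q : Fin n, W p q = (u p.val).coeff q.val := fun p q => rfl
  have hMapp : ∀ p q : Fin n, M p q = Y + cseq (p.val + q.val) := fun p q => rfl
  have hWtri : W.BlockTriangular OrderDual.toDual := by
    intro p q h
    exact u_coeff_zero_of_lt h
  have hdetW : W.det = 1 := by
    rw [Matrix.det_of_lowerTriangular W hWtri]
    refine Finset.prod_eq_one fun p _ => u_coeff_diag p.val
  set d : ℕ → ℚ := fun i => (-1) ^ i / 2 ^ (2 * i + 1) with hd
  have hdp : ∀ i : ℕ, d i = (-1) ^ i / 2 ^ (2 * i + 1) := fun i => rfl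
  have hdne : ∀ i : ℕ, d i ≠ 0 := by
    intro i
    rw [hdp]
    exact div_ne_zero (pow_ne_zero _ (by norm_num)) (by positivity)
  have hkey : W * M * Wᵀ =
      Matrix.diagonal (fun p : Fin n => d p.val) *
        (1 + Matrix.replicateCol Unit (fun p : Fin n => Y * vv p.val / d p.val) *
          Matrix.replicateRow Unit (fun q : Fin n => vv q.val)) := by
    funext p q
    have hlhs : (W * M * Wᵀ) p q =
        ∑ l ∈ range n, (u q.val).coeff l *
          ∑ k ∈ range n, (u p.val).coeff k * (Y + cseq (k + l)) := by
      rw [Matrix.mul_apply]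
      have hterm : ∀ l : Fin n, (W * M) p l * Wᵀ l q =
          (u q.val).coeff l.val * ∑ k : Fin n, (u p.val).coeff k.val *
            (Y + cseq (k.val + l.val)) := by
        intro l
        rw [Matrix.mul_apply, transpose_apply, hWapp]
        rw [Finset.sum_congr rfl (fun k (_ : k ∈ univ) => by rw [hWapp, hMapp])]
        ring
      rw [Finset.sum_congr rfl fun l _ => hterm l]
      rw [Fin.sum_univ_eq_sum_range (fun l => (u q.val).coeff l *
        ∑ k : Fin n, (u p.val).coeff k.val * (Y + cseq (k.val + l)))]
      refine Finset.sum_congr rfl fun l _ => ?_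
      congr 1
      exact Fin.sum_univ_eq_sum_range (fun k => (u p.val).coeff k * (Y + cseq (k + l))) n
    have hsplit : ∀ i j : ℕ, i < n → j < n →
        ∑ l ∈ range n, (u j).coeff l * ∑ k ∈ range n, (u i).coeff k * (Y + cseq (k + l)) =
        Y * vv i * vv j + ∑ l ∈ range n, (u j).coeff l * Nf i l := by
      intro i j hi hj
      have h1 : ∀ l : ℕ, (∑ k ∈ range n, (u i).coeff k * (Y + cseq (k + l))) =
          Y * vv i + Nf i l := by
        intro l
        have h2 : ∑ k ∈ range n, (u i).coeff k * (Y + cseq (k + l)) =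
            Y * ∑ k ∈ range n, (u i).coeff k + ∑ k ∈ range n, (u i).coeff k * cseq (k + l) := by
          rw [Finset.mul_sum, ← Finset.sum_add_distrib]
          exact Finset.sum_congr rfl fun k _ => by ring
        rw [h2, coeff_sum_eq_eval_one i n hi, u_eval_one, SS_extend i l n hi, SS_eq_Nf]
      calc ∑ l ∈ range n, (u j).coeff l * ∑ k ∈ range n, (u i).coeff k * (Y + cseq (k + l))
          = ∑ l ∈ range n, ((u j).coeff l * (Y * vv i) + (u j).coeff l * Nf i l) := by
            refine Finset.sum_congr rfl fun l _ => ?_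
            rw [h1 l]; ring
        _ = (Y * vv i) * ∑ l ∈ range n, (u j).coeff l +
              ∑ l ∈ range n, (u j).coeff l * Nf i l := by
            rw [Finset.sum_add_distrib, Finset.mul_sum]
            congr 1
            exact Finset.sum_congr rfl fun l _ => by ring
        _ = Y * vv i * vv j + ∑ l ∈ range n, (u j).coeff l * Nf i l := by
            rw [coeff_sum_eq_eval_one j n hj, u_eval_one]
    have hsym : ∀ i j : ℕ,
        ∑ l ∈ range n, (u j).coeff l * ∑ k ∈ range n, (u i).coeff k * (Y + cseq (k + l)) =
        ∑ l ∈ range n, (u i).coeff l * ∑ k ∈ range n, (u j).coeff k * (Y + cseq (k + l)) := by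
      intro i j
      have e1 : ∀ a b : ℕ,
          (∑ l ∈ range n, (u b).coeff l * ∑ k ∈ range n, (u a).coeff k * (Y + cseq (k + l))) =
          ∑ l ∈ range n, ∑ k ∈ range n, (u b).coeff l * ((u a).coeff k * (Y + cseq (k + l))) := by
        intro a b
        exact Finset.sum_congr rfl fun l _ => by rw [Finset.mul_sum]
      rw [e1, e1, Finset.sum_comm]
      refine Finset.sum_congr rfl fun l _ => Finset.sum_congr rfl fun k _ => ?_
      rw [show l + k = k + l by omega]
      ring
    have hdiagpart : ∀ i j : ℕ, i < n → j < n →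
        ∑ l ∈ range n, (u j).coeff l * ∑ k ∈ range n, (u i).coeff k * (Y + cseq (k + l)) =
        Y * vv i * vv j + (if i = j then (-1) ^ i / 2 ^ (2 * i + 1) else 0) := by
      intro i j hi hj
      rcases le_or_gt j i with hle | hlt
      · rw [hsplit i j hi hj, sum_coeff_Nf j i n hle hi]
        congr 1
        by_cases h : j = i
        · subst h; simp
        · rw [if_neg h, if_neg (fun hh => h hh.symm)]
      · rw [hsym i j, hsplit j i hj hi, sum_coeff_Nf i j n hlt.le hj,
          if_neg hlt.ne]
        ring
    rw [hlhs, hdiagpart p.val q.val p.isLt q.isLt]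
    rw [Matrix.mul_apply]
    rw [Finset.sum_eq_single_of_mem p (Finset.mem_univ p)
      (fun b _ hb => by rw [Matrix.diagonal_apply_ne' _ hb, zero_mul])]
    rw [Matrix.diagonal_apply_eq, Matrix.add_apply, Matrix.mul_apply]
    simp only [Matrix.replicateCol_apply, Matrix.replicateRow_apply, Finset.univ_unique, Finset.sum_const,
      Finset.card_singleton, one_smul]
    rw [Matrix.one_apply]
    by_cases h : p = q
    · subst h
      rw [if_pos rfl, if_pos rfl, ← hdp p.val]
      have := hdne p.val
      field_simp
      ring
    · rw [if_neg (fun hh : p.val = q.val => h (Fin.ext hh)), if_neg h]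
      have := hdne p.val
      field_simp
      ring
  have hdet1 : M.det = (W * M * Wᵀ).det := by
    rw [Matrix.det_mul, Matrix.det_mul, hdetW, Matrix.det_transpose, hdetW, one_mul, mul_one]
  rw [hdet1, hkey, Matrix.det_mul, Matrix.det_diagonal, Matrix.det_one_add_replicateCol_mul_replicateRow]
  have hprod : ∏ p : Fin n, d p.val = (-1 : ℚ) ^ (n.choose 2) * (1 / 2) ^ (n ^ 2) := by
    have h1 : ∀ p : Fin n, d p.val = (-1 : ℚ) ^ (p.val) * (1 / 2) ^ (2 * p.val + 1) := by
      intro p; rw [hdp, _root_.one_div_pow, mul_one_div]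
    rw [Finset.prod_congr rfl fun p _ => h1 p, Finset.prod_mul_distrib]
    rw [Fin.prod_univ_eq_prod_range (fun i => (-1 : ℚ) ^ i) n,
      Fin.prod_univ_eq_prod_range (fun i => ((1 : ℚ) / 2) ^ (2 * i + 1)) n]
    rw [Finset.prod_pow_eq_pow_sum, Finset.prod_pow_eq_pow_sum, sum_range_odd, sum_range_id']
  have hdot : ((fun q : Fin n => vv q.val) ⬝ᵥ (fun p : Fin n => Y * vv p.val / d p.val)) =
      Y * (2 * (((n + 1) / 2 : ℕ) : ℚ)) := by
    rw [dotProduct]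
    rw [Fin.sum_univ_eq_sum_range (fun i => vv i * (Y * vv i / d i)) n]
    have h1 : ∀ i : ℕ, vv i * (Y * vv i / d i) = Y * (if i % 2 = 0 then (2:ℚ) else 0) := by
      intro i
      rcases Nat.even_or_odd i with he | ho
      · have h2 : i % 2 = 0 := Nat.even_iff.mp he
        rw [if_pos h2, vv, if_pos h2, hdp, he.neg_one_pow]
        have h3 : (2:ℚ) ^ (2 * i + 1) = 2 ^ i * 2 ^ i * 2 := by
          rw [two_mul, pow_add, pow_add, pow_one]
        rw [h3]
        have h4 : ((1:ℚ)/2) ^ i = (2 ^ i)⁻¹ := by rw [one_div, inv_pow]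
        rw [h4]
        have h5 : (2:ℚ) ^ i ≠ 0 := by positivity
        field_simp
      · have h2 : ¬ (i % 2 = 0) := by rw [Nat.odd_iff] at ho; omega
        rw [if_neg h2, vv, if_neg h2]
        ring_nf
    rw [Finset.sum_congr rfl fun i _ => h1 i, ← Finset.mul_sum, evens_sum]
  rw [hprod, hdot]
  have hzp : (2:ℚ) ^ (-((n ^ 2 : ℕ) : ℤ)) = ((1:ℚ) / 2) ^ (n ^ 2) := by
    rw [_root_.zpow_neg, zpow_natCast, one_div, inv_pow]
  rw [hzp]
  ring

end
end HDAux

open Matrix in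
theorem hankel_det_central_binomial_shifted_plus_Y (Y : ℚ) (n : ℕ) (hn : 0 < n) :
    det (of fun i j : Fin n =>
        Y + (2 : ℚ) ^ (-(2 * (((i.val + j.val + 2) / 2 : ℕ) : ℤ))) *
          (Nat.choose (2 * ((i.val + j.val + 2) / 2)) ((i.val + j.val + 2) / 2) : ℚ)) =
      (-1 : ℚ) ^ (Nat.choose n 2) * (2 : ℚ) ^ (-((n ^ 2 : ℕ) : ℤ)) *
        (2 * (((n + 1) / 2 : ℕ) : ℚ) * Y + 1) := by
  exact HDAux.main Y n hn
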